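/- Let S be a saturated Hopf C*-algebra and A a left Hopf ideal of S* (a nonzero S-invariant left ideal of the convolution algebra S*). If A has a bounded left σ(S*,S)-approximate identity, then S* is unital and A is σ(S*,S)-dense in S*. -/

import Mathlib

open Filter Topology

/-- A (saturated) Hopf C*-algebra structure on a C*-algebra `S`, encoded through the
slice maps of the comultiplication `δ : S → M(S ⊗ S)`:
`sliceR f = (id ⊗ f) ∘ δ` and `sliceL f = (f ⊗ id) ∘ δ`.  The convolution product on
the dual `S*` is `f ★ g = (f ⊗ g) ∘ δ = f ∘ sliceR g = g ∘ sliceL f`.  Saturation is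
encoded via its functional form: for every nonzero `S`-invariant subspace `N` of `S*`,
the span of the slices `(id ⊗ g) δ(r)` (resp. `(g ⊗ id) δ(r)`), `g ∈ N`, `r ∈ S`, is
dense in `S`. -/
structure HopfCStarStructure (S : Type) [NonUnitalNormedRing S] [StarRing S] [CStarRing S]
    [NormedSpace ℂ S] [IsScalarTower ℂ S S] [SMulCommClass ℂ S S] [StarModule ℂ S]
    [CompleteSpace S] where
  sliceR : (S →L[ℂ] ℂ) →ₗ[ℂ] (S →L[ℂ] S)
  sliceL : (S →L[ℂ] ℂ) →ₗ[ℂ] (S →L[ℂ] S)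
  norm_sliceR : ∀ (f : S →L[ℂ] ℂ) (r : S), ‖sliceR f r‖ ≤ ‖f‖ * ‖r‖
  norm_sliceL : ∀ (f : S →L[ℂ] ℂ) (r : S), ‖sliceL f r‖ ≤ ‖f‖ * ‖r‖
  conv_eq : ∀ (f g : S →L[ℂ] ℂ) (r : S), f (sliceR g r) = g (sliceL f r)
  sliceR_conv : ∀ f g : S →L[ℂ] ℂ,
    (sliceR f).comp (sliceR g) = sliceR (f.comp (sliceR g))
  sliceL_conv : ∀ f g : S →L[ℂ] ℂ,
    (sliceL g).comp (sliceL f) = sliceL (f.comp (sliceR g))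
  slice_comm : ∀ f g : S →L[ℂ] ℂ,
    (sliceL f).comp (sliceR g) = (sliceR g).comp (sliceL f)
  saturatedR : ∀ N : Submodule ℂ (S →L[ℂ] ℂ), N ≠ ⊥ →
    (∀ f ∈ N, ∀ s : S, f.comp (ContinuousLinearMap.mul ℂ S s) ∈ N ∧
        f.comp ((ContinuousLinearMap.mul ℂ S).flip s) ∈ N) →
    Dense (↑(Submodule.span ℂ {x : S | ∃ f ∈ N, ∃ r : S, x = sliceR f r}) : Set S)
  saturatedL : ∀ N : Submodule ℂ (S →L[ℂ] ℂ), N ≠ ⊥ →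
    (∀ f ∈ N, ∀ s : S, f.comp (ContinuousLinearMap.mul ℂ S s) ∈ N ∧
        f.comp ((ContinuousLinearMap.mul ℂ S).flip s) ∈ N) →
    Dense (↑(Submodule.span ℂ {x : S | ∃ f ∈ N, ∃ r : S, x = sliceL f r}) : Set S)

/-- The convolution product `f ★ g = (f ⊗ g) ∘ δ` on the dual of a Hopf C*-algebra. -/
noncomputable def HopfCStarStructure.conv {S : Type} [NonUnitalNormedRing S] [StarRing S] [CStarRing S]
    [NormedSpace ℂ S] [IsScalarTower ℂ S S] [SMulCommClass ℂ S S] [StarModule ℂ S]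
    [CompleteSpace S] (h : HopfCStarStructure S) (f g : S →L[ℂ] ℂ) : S →L[ℂ] ℂ :=
  f.comp (h.sliceR g)

/-- Let `A` be a left Hopf ideal of `S*` (a nonzero `S`-invariant left
ideal of the convolution algebra).  If `A` has a bounded left `σ(S*,S)`-approximate
identity, then `S*` is unital (for convolution) and `A` is `σ(S*,S)`-dense in `S*`. -/
theorem left_hopf_ideal_weakstar_approx_id
    (S : Type) [NonUnitalNormedRing S] [StarRing S] [CStarRing S]
    [NormedSpace ℂ S] [IsScalarTower ℂ S S] [SMulCommClass ℂ S S] [StarModule ℂ S]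
    [CompleteSpace S] (h : HopfCStarStructure S)
    (A : Submodule ℂ (S →L[ℂ] ℂ)) (hA_ne : A ≠ ⊥)
    (hA_ideal : ∀ f : S →L[ℂ] ℂ, ∀ g ∈ A, h.conv f g ∈ A)
    (hA_inv : ∀ f ∈ A, ∀ s : S, f.comp (ContinuousLinearMap.mul ℂ S s) ∈ A ∧
        f.comp ((ContinuousLinearMap.mul ℂ S).flip s) ∈ A)
    (ι : Type) (l : Filter ι) [l.NeBot] (f : ι → (S →L[ℂ] ℂ))
    (hmem : ∀ i, f i ∈ A) (hbdd : ∃ C : ℝ, ∀ i, ‖f i‖ ≤ C)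
    (hleft : ∀ g ∈ A, ∀ s : S, Tendsto (fun i => h.conv (f i) g s) l (𝓝 (g s))) :
    (∃ e : S →L[ℂ] ℂ, ∀ g : S →L[ℂ] ℂ, h.conv e g = g ∧ h.conv g e = g) ∧
    (∀ (g : S →L[ℂ] ℂ) (F : Finset S) (ε : ℝ), 0 < ε →
      ∃ g' ∈ A, ∀ s ∈ F, ‖g s - g' s‖ < ε) := by
  classical
  obtain ⟨C, hC⟩ := hbdd
  -- push the net into the weak dual and find a cluster point by Banach–Alaoglu
  set u : ι → WeakDual ℂ S := fun i => StrongDual.toWeakDual (f i) with hu_def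
  have hle : Filter.map u l ≤
      𝓟 (WeakDual.toStrongDual ⁻¹' Metric.closedBall (0 : StrongDual ℂ S) C) := by
    rw [Filter.le_principal_iff]
    refine Filter.mem_map.2 (Filter.univ_mem' fun i => ?_)
    simpa [u, Metric.mem_closedBall, dist_zero_right] using hC i
  obtain ⟨e₀, -, hcl⟩ :=
    (WeakDual.isCompact_closedBall (𝕜 := ℂ) (E := S) 0 C).exists_clusterPt hle
  set e : S →L[ℂ] ℂ := WeakDual.toStrongDual e₀ with he_def
  -- pointwise cluster values
  have hclx : ∀ x : S, ClusterPt (e x) (Filter.map (fun i => f i x) l) := by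
    intro x
    have hf : Filter.Tendsto (fun φ : WeakDual ℂ S => φ x) (Filter.map u l)
        (Filter.map (fun i => f i x) l) := by
      rw [Filter.tendsto_map'_iff]; exact Filter.tendsto_map
    exact hcl.map (WeakDual.eval_continuous x).continuousAt hf
  have hval : ∀ (v : ι → ℂ) (a : ℂ) (x : S), Filter.Tendsto v l (𝓝 a) →
      ClusterPt a (Filter.map v l) → True := fun _ _ _ _ _ => trivial
  -- a cluster value of a convergent net equals its limit
  have huniq : ∀ (v : ι → ℂ) (a b : ℂ), Filter.Tendsto v l (𝓝 a) →
      ClusterPt b (Filter.map v l) → a = b := by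
    intro v a b hv hb
    exact (eq_of_nhds_neBot (hb.mono hv)).symm
  -- e is a left identity on A
  have key : ∀ g ∈ A, ∀ x : S, e (h.sliceR g x) = g x := by
    intro g hg x
    exact (huniq _ _ _ (hleft g hg x) (hclx (h.sliceR g x))).symm
  have keyconv : ∀ g ∈ A, h.conv e g = g := by
    intro g hg
    exact ContinuousLinearMap.ext (key g hg)
  -- sliceR e = id
  have hid_of_dense : ∀ (T : S →L[ℂ] S) (s : Set S),
      Dense (↑(Submodule.span ℂ s) : Set S) → (∀ x ∈ s, T x = x) →
      T = ContinuousLinearMap.id ℂ S := by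
    intro T s hd hTx
    have hsub : s ⊆ ↑((T - ContinuousLinearMap.id ℂ S).ker) := by
      intro x hx
      simp only [SetLike.mem_coe, LinearMap.mem_ker, ContinuousLinearMap.coe_sub',
        Pi.sub_apply, ContinuousLinearMap.coe_id', id_eq, sub_eq_zero]
      simpa [sub_eq_zero] using hTx x hx
    have hspan : (↑(Submodule.span ℂ s) : Set S) ⊆
        ↑((T - ContinuousLinearMap.id ℂ S).ker) := by
      exact_mod_cast Submodule.span_le.2 hsub
    have hclosed : IsClosed (↑((T - ContinuousLinearMap.id ℂ S).ker) : Set S) :=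
      ContinuousLinearMap.isClosed_ker (T - ContinuousLinearMap.id ℂ S)
    have hall : ∀ x : S, (T - ContinuousLinearMap.id ℂ S) x = 0 := by
      intro x
      have hx : x ∈ closure (↑(Submodule.span ℂ s) : Set S) := hd x
      have := closure_minimal hspan hclosed hx
      simpa [LinearMap.mem_ker] using this
    ext x
    have := hall x
    simpa [sub_eq_zero] using this
  have hsR : h.sliceR e = ContinuousLinearMap.id ℂ S := by
    refine hid_of_dense _ _ (h.saturatedR A hA_ne hA_inv) ?_
    rintro x ⟨g, hg, r, rfl⟩
    have h1 : (h.sliceR e).comp (h.sliceR g) = h.sliceR (e.comp (h.sliceR g)) :=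
      h.sliceR_conv e g
    have h2 : e.comp (h.sliceR g) = g := keyconv g hg
    calc h.sliceR e (h.sliceR g r) = ((h.sliceR e).comp (h.sliceR g)) r := rfl
      _ = h.sliceR (e.comp (h.sliceR g)) r := by rw [h1]
      _ = h.sliceR g r := by rw [h2]
  -- ⊤ is a nonzero invariant subspace
  have htop_ne : (⊤ : Submodule ℂ (S →L[ℂ] ℂ)) ≠ ⊥ := by
    obtain ⟨g0, -, hg0⟩ := (Submodule.ne_bot_iff A).1 hA_ne
    intro htop
    exact hg0 (by simpa [htop] using Submodule.mem_top (R := ℂ) (x := g0))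
  have hsL : h.sliceL e = ContinuousLinearMap.id ℂ S := by
    refine hid_of_dense _ _ (h.saturatedL ⊤ htop_ne (fun f _ s => ⟨trivial, trivial⟩)) ?_
    rintro x ⟨g, -, r, rfl⟩
    have h1 : (h.sliceL e).comp (h.sliceL g) = h.sliceL (g.comp (h.sliceR e)) :=
      h.sliceL_conv g e
    have h2 : g.comp (h.sliceR e) = g := by rw [hsR, ContinuousLinearMap.comp_id]
    calc h.sliceL e (h.sliceL g r) = ((h.sliceL e).comp (h.sliceL g)) r := rfl
      _ = h.sliceL (g.comp (h.sliceR e)) r := by rw [h1]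
      _ = h.sliceL g r := by rw [h2]
  -- evaluation of e against left slices
  have heval : ∀ (g : S →L[ℂ] ℂ) (s : S), e (h.sliceL g s) = g s := by
    intro g s
    have := h.conv_eq g e s
    rw [hsR] at this
    simpa using this.symm
  constructor
  · refine ⟨e, fun g => ⟨?_, ?_⟩⟩
    · ext r
      have h1 : h.conv e g r = e (h.sliceR g r) := rfl
      have h2 := h.conv_eq e g r
      rw [h1, h2, hsL]
      rfl
    · ext r
      have h1 : h.conv g e r = g (h.sliceR e r) := rfl
      rw [h1, hsR]
      rfl
  · intro g F ε hε
    have hev : ∀ᶠ φ in 𝓝 e₀, ∀ s ∈ F, ‖g s - φ (h.sliceL g s)‖ < ε := by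
      rw [Filter.eventually_all_finset]
      intro s hs
      have hc : Continuous fun φ : WeakDual ℂ S => ‖g s - φ (h.sliceL g s)‖ :=
        (continuous_const.sub (WeakDual.eval_continuous (h.sliceL g s))).norm
      have hc2 : Filter.Tendsto (fun φ : WeakDual ℂ S => ‖g s - φ (h.sliceL g s)‖) (𝓝 e₀)
          (𝓝 ‖g s - e₀ (h.sliceL g s)‖) := hc.tendsto e₀
      have h0 : ‖g s - e₀ (h.sliceL g s)‖ = 0 := by
        have := heval g s
        simp only [show (e₀ : S → ℂ) (h.sliceL g s) = e (h.sliceL g s) from rfl]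
        rw [this, sub_self, norm_zero]
      rw [h0] at hc2
      exact hc2.eventually_lt_const hε
    have hfreq : ∃ᶠ φ in Filter.map u l, ∀ s ∈ F, ‖g s - φ (h.sliceL g s)‖ < ε := by
      have h1 : ∀ᶠ φ in 𝓝 e₀ ⊓ Filter.map u l, ∀ s ∈ F, ‖g s - φ (h.sliceL g s)‖ < ε :=
        Filter.Eventually.filter_mono inf_le_left hev
      haveI : (𝓝 e₀ ⊓ Filter.map u l).NeBot := hcl
      have h2 : ∃ᶠ φ in 𝓝 e₀ ⊓ Filter.map u l, ∀ s ∈ F, ‖g s - φ (h.sliceL g s)‖ < ε :=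
        h1.frequently
      exact h2.filter_mono inf_le_right
    rw [Filter.frequently_map] at hfreq
    obtain ⟨i, hi⟩ := hfreq.exists
    refine ⟨h.conv g (f i), hA_ideal g (f i) (hmem i), fun s hs => ?_⟩
    have h1 : h.conv g (f i) s = f i (h.sliceL g s) := h.conv_eq g (f i) s
    rw [h1]
    exact hi s hs
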